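/- Let (g, Ric, R) be as in a 4-dimensional Lorentzian vector space, with Ric = c·A⊗A + d·g where A is a unit timelike covector (g(A♯,A♯) = -1), c = κ²(p+ρ)/F_R and d = (2κ²p + F)/(2F_R) with F_R ≠ 0. If additionally Ric(A♯,·) = (R/4)·A and trace_g(Ric) = R, then p = -(2F - R·F_R)/(4κ²) and ρ = (2F - R·F_R)/(4κ²); in particular p + ρ = 0. -/
import Mathlib

open Matrix


/-- Perfect-fluid generalized Ricci recurrent solution of F(R)-gravity with
constant scalar curvature: if `Ric = c·A⊗A + d·g` with `A` unit timelike,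
`c = κ²(p+ρ)/F_R`, `d = (2κ²p+F)/(2F_R)`, `Ric(A♯,·) = (R/4)A` and
`trace_g Ric = R`, then `p = -(2F - R·F_R)/(4κ²)`, `ρ = (2F - R·F_R)/(4κ²)`
and `p + ρ = 0`. -/
theorem GR4_FR_perfect_fluid_eos
    (g ginv Ric : Fin 4 → Fin 4 → ℝ) (A : Fin 4 → ℝ)
    (R p ρ κ F FR c d : ℝ)
    (hκ : κ ≠ 0) (hFR : FR ≠ 0)
    (hgsymm : ∀ i j, g i j = g j i)
    (hinv : ∀ i j, (∑ k, ginv i k * g k j) = if i = j then (1:ℝ) else 0)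
    (hunit : (∑ j, ∑ k, ginv j k * A j * A k) = -1)
    (hc : c = κ^2 * (p + ρ) / FR)
    (hd : d = (2 * κ^2 * p + F) / (2 * FR))
    (hRic : ∀ i j, Ric i j = c * A i * A j + d * g i j)
    (heigen : ∀ i, (∑ j, (∑ k, ginv j k * A k) * Ric j i) = (R/4) * A i)
    (htrace : (∑ j, ∑ k, ginv j k * Ric j k) = R) :
    p = -(2 * F - R * FR) / (4 * κ^2) ∧
    ρ = (2 * F - R * FR) / (4 * κ^2) ∧
    p + ρ = 0 := by
  classical
  -- matrix setup
  set G : Matrix (Fin 4) (Fin 4) ℝ := Matrix.of g with hG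
  set Gi : Matrix (Fin 4) (Fin 4) ℝ := Matrix.of ginv with hGiDef
  have hGiG : Gi * G = 1 := by
    ext i j
    simpa [Matrix.mul_apply, Matrix.one_apply, hG, hGiDef] using hinv i j
  have hGGi : G * Gi = 1 := mul_eq_one_comm.mp hGiG
  have hGsym : Gᵀ = G := by
    ext i j
    exact hgsymm j i
  have hGit : Giᵀ * G = 1 := by
    have h := congrArg Matrix.transpose hGGi
    rwa [Matrix.transpose_mul, Matrix.transpose_one, hGsym] at h
  have hGisymM : Giᵀ = Gi := by
    calc Giᵀ = Giᵀ * (G * Gi) := by rw [hGGi, Matrix.mul_one]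
      _ = (Giᵀ * G) * Gi := by rw [Matrix.mul_assoc]
      _ = Gi := by rw [hGit, Matrix.one_mul]
  have hginvsymm : ∀ i j, ginv i j = ginv j i := by
    intro i j
    have := congrFun (congrFun hGisymM j) i
    simpa [Matrix.transpose_apply, hGiDef] using this
  -- eigenvector equation gives (-c + d) = R/4 at points where A ≠ 0
  have key1 : ∀ i, ((-c) + d) * A i = (R/4) * A i := by
    intro i
    have h := heigen i
    have e1 : (∑ j, (∑ k, ginv j k * A k) * Ric j i)
        = (∑ j, (∑ k, ginv j k * A k) * (c * A j * A i))
          + (∑ j, (∑ k, ginv j k * A k) * (d * g j i)) := by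
      rw [← Finset.sum_add_distrib]
      apply Finset.sum_congr rfl
      intro j _
      rw [hRic j i]; ring
    have e2 : (∑ j, (∑ k, ginv j k * A k) * (c * A j * A i))
        = c * A i * (∑ j, ∑ k, ginv j k * A j * A k) := by
      rw [Finset.mul_sum]
      apply Finset.sum_congr rfl
      intro j _
      rw [Finset.sum_mul, Finset.mul_sum]
      apply Finset.sum_congr rfl
      intro k _
      ring
    have e3 : (∑ j, (∑ k, ginv j k * A k) * (d * g j i)) = d * A i := by
      have e3a : (∑ j, (∑ k, ginv j k * A k) * (d * g j i))
          = ∑ j, ∑ k, ginv j k * A k * (d * g j i) := by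
        apply Finset.sum_congr rfl
        intro j _
        rw [Finset.sum_mul]
      have e3b : (∑ j, ∑ k, ginv j k * A k * (d * g j i))
          = ∑ k, ∑ j, ginv j k * A k * (d * g j i) := Finset.sum_comm
      have e3c : ∀ k, (∑ j, ginv j k * A k * (d * g j i))
          = d * A k * (∑ j, ginv k j * g j i) := by
        intro k
        rw [Finset.mul_sum]
        apply Finset.sum_congr rfl
        intro j _
        rw [hginvsymm j k]; ring
      rw [e3a, e3b, Finset.sum_congr rfl (fun k _ => e3c k)]
      have : ∀ k, d * A k * (∑ j, ginv k j * g j i)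
          = if k = i then d * A k else 0 := by
        intro k
        rw [hinv k i]
        split <;> simp
      rw [Finset.sum_congr rfl (fun k _ => this k)]
      simp
    rw [e1, e2, e3, hunit] at h
    linarith
  -- A is nonzero somewhere
  obtain ⟨i0, hi0⟩ : ∃ i, A i ≠ 0 := by
    by_contra hz
    push_neg at hz
    simp [hz] at hunit
  have hdc : (-c) + d = R / 4 :=
    mul_right_cancel₀ hi0 (key1 i0)
  -- trace equation gives -c + 4d = R
  have htr4 : (∑ j, ∑ k, ginv j k * g j k) = 4 := by
    have : ∀ j : Fin 4, (∑ k, ginv j k * g j k) = 1 := by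
      intro j
      have h := hinv j j
      simp only [if_pos rfl] at h
      calc (∑ k, ginv j k * g j k) = ∑ k, ginv j k * g k j := by
            apply Finset.sum_congr rfl
            intro k _
            rw [hgsymm j k]
        _ = 1 := h
    rw [Finset.sum_congr rfl (fun j _ => this j)]
    simp
  have htr : (-c) + 4 * d = R := by
    have e : (∑ j, ∑ k, ginv j k * Ric j k)
        = c * (∑ j, ∑ k, ginv j k * A j * A k)
          + d * (∑ j, ∑ k, ginv j k * g j k) := by
      rw [Finset.mul_sum, Finset.mul_sum, ← Finset.sum_add_distrib]
      apply Finset.sum_congr rfl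
      intro j _
      rw [Finset.mul_sum, Finset.mul_sum, ← Finset.sum_add_distrib]
      apply Finset.sum_congr rfl
      intro k _
      rw [hRic j k]; ring
    rw [e, hunit, htr4] at htrace
    linarith
  -- solve: c = 0, d = R/4
  have hc0 : c = 0 := by linarith
  have hd4 : d = R / 4 := by linarith
  have hpρ : p + ρ = 0 := by
    have h := hc0
    rw [hc, div_eq_zero_iff] at h
    rcases h with h | h
    · exact (mul_eq_zero.mp h).resolve_left (pow_ne_zero 2 hκ)
    · exact absurd h hFR
  have hp : p = -(2 * F - R * FR) / (4 * κ^2) := by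
    rw [hd] at hd4
    have h2 : 2 * κ^2 * p + F = R / 4 * (2 * FR) := by
      field_simp at hd4
      linarith
    field_simp
    linarith
  refine ⟨hp, ?_, hpρ⟩
  have : ρ = -p := by linarith
  rw [this, hp]
  ring
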